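/- In R′, each elementary polynomial σ_k, k = 1,…,n, lies in the center of R′, and the family (σ_1, σ_2, …, σ_n), regarded as elements of the (commutative) center of R′, is algebraically independent over K; thus the σ_k generate a commutative polynomial domain K[σ_1,…,σ_n] inside the center of R′. -/

import Mathlib

open Finset

/-- The `k`-th elementary polynomial `σ_k` in the noncommuting variables
`x_1, …, x_n` of the free algebra `K⟨x_1,…,x_n⟩`. -/
noncomputable def elemPoly (K : Type*) [Field K] (n k : ℕ) : FreeAlgebra K (Fin n) :=
  ∑ s ∈ Finset.univ.powersetCard k, ((s.sort (· ≤ ·)).map (FreeAlgebra.ι K)).prod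

/-- The relation on the free algebra identifying `x_i * σ_k` with `σ_k * x_i`
for `1 ≤ i, k ≤ n`; the quotient `R′ = P/I` by the two-sided ideal `I` generated
by the commutators `[x_i, σ_k]` is `RingQuot` of this relation. -/
noncomputable def commRel (K : Type*) [Field K] (n : ℕ) :
    FreeAlgebra K (Fin n) → FreeAlgebra K (Fin n) → Prop :=
  fun a b => ∃ (i : Fin n) (k : ℕ), 1 ≤ k ∧ k ≤ n ∧
    a = FreeAlgebra.ι K i * elemPoly K n k ∧ b = elemPoly K n k * FreeAlgebra.ι K i

/-- The quotient ring `R′ = P/I`. -/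
noncomputable abbrev Rquot (K : Type*) [Field K] (n : ℕ) := RingQuot (commRel K n)

/-- The quotient map `P → R′`. -/
noncomputable def mkR (K : Type*) [Field K] (n : ℕ) :
    FreeAlgebra K (Fin n) →ₐ[K] Rquot K n :=
  RingQuot.mkAlgHom K (commRel K n)

/-- The image in `R′` of the generator `x_i`. -/
noncomputable def XR (K : Type*) [Field K] (n : ℕ) (i : Fin n) : Rquot K n :=
  mkR K n (FreeAlgebra.ι K i)

set_option maxHeartbeats 1000000 in
/-- In `R′`, each elementary polynomial `σ_k`, `1 ≤ k ≤ n`, is central, and the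
family `(σ_1, …, σ_n)`, regarded as elements of the (commutative) center of `R′`,
is algebraically independent over `K`. -/
theorem elemPoly_central_and_algebraicallyIndependent
    (K : Type*) [Field K] [CharZero K] (n : ℕ) (hn : 3 ≤ n) :
    ∃ hc : ∀ k : Fin n, mkR K n (elemPoly K n ((k : ℕ) + 1)) ∈ Subalgebra.center K (Rquot K n),
      AlgebraicIndependent K (fun k : Fin n =>
        (⟨mkR K n (elemPoly K n ((k : ℕ) + 1)), hc k⟩ : Subalgebra.center K (Rquot K n))) := by
  classical
  -- centrality
  have hc : ∀ k : Fin n, mkR K n (elemPoly K n ((k : ℕ) + 1)) ∈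
      Subalgebra.center K (Rquot K n) := by
    intro k
    rw [Subalgebra.mem_center_iff]
    intro b
    obtain ⟨a, rfl⟩ := RingQuot.mkAlgHom_surjective K (commRel K n) b
    show mkR K n a * _ = _ * mkR K n a
    induction a using FreeAlgebra.induction with
    | grade0 r => simp [Algebra.commutes]
    | grade1 i =>
        rw [← map_mul, ← map_mul]
        exact RingQuot.mkAlgHom_rel K
          ⟨i, (k : ℕ) + 1, Nat.succ_le_succ (Nat.zero_le _), Nat.succ_le_of_lt k.2, rfl, rfl⟩
    | add x y hx hy => rw [map_add, add_mul, mul_add, hx, hy]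
    | mul x y hx hy => rw [map_mul, mul_assoc, hy, ← mul_assoc, hx, mul_assoc]
  refine ⟨hc, ?_⟩
  -- the abelianization map to `MvPolynomial`
  set φ : FreeAlgebra K (Fin n) →ₐ[K] MvPolynomial (Fin n) K :=
    FreeAlgebra.lift K MvPolynomial.X with hφ
  have hrel : ∀ ⦃a b⦄, commRel K n a b → φ a = φ b := by
    rintro a b ⟨i, k, -, -, rfl, rfl⟩
    rw [map_mul, map_mul, mul_comm]
  set ψ : Rquot K n →ₐ[K] MvPolynomial (Fin n) K :=
    RingQuot.liftAlgHom K ⟨φ, hrel⟩ with hψ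
  have hφσ : ∀ k : ℕ, φ (elemPoly K n k) = MvPolynomial.esymm (Fin n) K k := by
    intro k
    rw [elemPoly, map_sum, MvPolynomial.esymm]
    refine Finset.sum_congr rfl fun s _ => ?_
    rw [map_list_prod, List.map_map]
    have : (φ ∘ FreeAlgebra.ι K) = (MvPolynomial.X : Fin n → MvPolynomial (Fin n) K) := by
      funext i; simp [hφ]
    rw [this, Finset.prod_eq_multiset_prod, ← Finset.sort_eq s (· ≤ ·), Multiset.map_coe,
      Multiset.prod_coe]
  -- algebraic independence of the elementary symmetric polynomials
  have hesymm : AlgebraicIndependent K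
      (fun i : Fin n => MvPolynomial.esymm (Fin n) K ((i : ℕ) + 1)) := by
    rw [algebraicIndependent_iff_injective_aeval]
    have hinj := MvPolynomial.esymmAlgHom_injective (σ := Fin n) (R := K) (n := n)
      (by simp)
    intro p q h
    apply hinj
    apply Subtype.ext
    rw [MvPolynomial.esymmAlgHom_apply, MvPolynomial.esymmAlgHom_apply]
    exact h
  -- pull back along `ψ ∘ val`
  refine AlgebraicIndependent.of_comp (ψ.comp (Subalgebra.center K (Rquot K n)).val) ?_
  have key : ((ψ.comp (Subalgebra.center K (Rquot K n)).val) ∘ fun k : Fin n =>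
      (⟨mkR K n (elemPoly K n ((k : ℕ) + 1)), hc k⟩ : Subalgebra.center K (Rquot K n))) =
      fun i : Fin n => MvPolynomial.esymm (Fin n) K ((i : ℕ) + 1) := by
    funext k
    show ψ (mkR K n (elemPoly K n ((k : ℕ) + 1))) = _
    rw [mkR, hψ, RingQuot.liftAlgHom_mkAlgHom_apply]
    exact hφσ _
  rw [key]
  exact hesymm
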